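/- For every integer m ≥ 1, the series Σ_{k=1}^∞ H_k²/((k+m)(k+m+1)) converges to (1/m)(π²/6 + H_m² + H̄_m − H_m/m). -/

import Mathlib

open Finset

open Filter Topology


/-- `n`-th harmonic number. -/
noncomputable def H (n : ℕ) : ℝ := ∑ k ∈ Finset.Icc 1 n, (1 : ℝ) / k
/-- Second-order harmonic number. -/
noncomputable def Hbar (n : ℕ) : ℝ := ∑ k ∈ Finset.Icc 1 n, (1 : ℝ) / (k : ℝ) ^ 2

lemma H_zero : H 0 = 0 := by simp [H]
lemma Hbar_zero : Hbar 0 = 0 := by simp [Hbar]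
lemma H_succ (n : ℕ) : H (n + 1) = H n + 1 / (n + 1) := by
  rw [H, Finset.sum_Icc_succ_top (by omega)]; push_cast; rfl
lemma Hbar_succ (n : ℕ) : Hbar (n + 1) = Hbar n + 1 / ((n : ℝ) + 1) ^ 2 := by
  rw [Hbar, Finset.sum_Icc_succ_top (by omega)]; push_cast; rfl
lemma H_nonneg (n : ℕ) : 0 ≤ H n := by
  apply Finset.sum_nonneg; intro i _; positivity
lemma H_one_le (n : ℕ) : 1 ≤ H (n + 1) := by
  induction n with
  | zero => simp [H]
  | succ k ih =>
    rw [H_succ]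
    have : (0:ℝ) < 1 / (↑(k+1) + 1) := by positivity
    linarith
lemma H_eq_harmonic (n : ℕ) : H n = (harmonic n : ℝ) := by
  rw [harmonic_eq_sum_Icc]; push_cast [H, one_div]; rfl
lemma H_le_log (n : ℕ) : H n ≤ 1 + Real.log n := by
  rw [H_eq_harmonic]; exact harmonic_le_one_add_log n

lemma tele (w : ℕ → ℝ) (hmono : ∀ n, w (n + 1) ≤ w n)
    (hlim : Filter.Tendsto w Filter.atTop (nhds 0)) :
    HasSum (fun k => w k - w (k + 1)) (w 0) := by
  rw [hasSum_iff_tendsto_nat_of_nonneg (fun i => by linarith [hmono i])]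
  simp only [Finset.sum_range_sub' w]
  simpa using tendsto_const_nhds.sub hlim

lemma tele_shift (w : ℕ → ℝ) (hmono : ∀ n, w (n + 1) ≤ w n)
    (hlim : Filter.Tendsto w Filter.atTop (nhds 0)) (a : ℕ) :
    HasSum (fun k => w (k + a) - w (k + a + 1)) (w a) := by
  have := tele (fun n => w (n + a)) (fun n => by simpa [Nat.add_right_comm] using hmono (n + a))
    (hlim.comp (Filter.tendsto_add_atTop_nat a))
  simpa [Nat.add_right_comm] using this

lemma H_range (n : ℕ) : H n = ∑ i ∈ Finset.range n, 1 / ((i : ℝ) + 1) := by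
  rw [H_eq_harmonic, harmonic]
  push_cast
  simp [one_div]

lemma tendsto_one_div_shift (a : ℝ) :
    Filter.Tendsto (fun n : ℕ => 1 / ((n : ℝ) + 1 + a)) Filter.atTop (nhds 0) := by
  simp only [one_div]
  apply Filter.Tendsto.comp tendsto_inv_atTop_zero
  apply Filter.tendsto_atTop_add_const_right
  apply Filter.tendsto_atTop_add_const_right
  exact tendsto_natCast_atTop_atTop

lemma hasSum_recip_consec (t : ℕ) :
    HasSum (fun k : ℕ => 1 / ((k : ℝ) + 1 + t) - 1 / ((k : ℝ) + 2 + t)) (1 / (1 + (t : ℝ))) := by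
  have := tele (fun n : ℕ => 1 / ((n : ℝ) + 1 + t))
    (fun n => by
      have h1 : (0:ℝ) < (n : ℝ) + 1 + t := by positivity
      have h2 : (0:ℝ) < (n : ℝ) + 2 + t := by positivity
      rw [div_le_div_iff₀ (by push_cast; linarith) h1]
      push_cast; linarith)
    (tendsto_one_div_shift t)
  simp only [Nat.cast_add, Nat.cast_one] at this
  convert this using 2 with k
  · push_cast; ring_nf
  · norm_num

lemma hasSum_gap {a b : ℕ} (hab : a ≤ b) :
    HasSum (fun k : ℕ => 1 / ((k : ℝ) + 1 + a) - 1 / ((k : ℝ) + 1 + b)) (H b - H a) := by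
  have key : ∀ k : ℕ, 1 / ((k : ℝ) + 1 + a) - 1 / ((k : ℝ) + 1 + b)
      = ∑ t ∈ Finset.Ico a b, (1 / ((k : ℝ) + 1 + t) - 1 / ((k : ℝ) + 2 + t)) := by
    intro k
    induction b, hab using Nat.le_induction with
    | base => simp
    | succ b hb ih =>
      rw [Finset.sum_Ico_succ_top hb, ← ih]
      push_cast; ring
  have hsum : HasSum (fun k : ℕ => ∑ t ∈ Finset.Ico a b,
      (1 / ((k : ℝ) + 1 + t) - 1 / ((k : ℝ) + 2 + t)))
      (∑ t ∈ Finset.Ico a b, 1 / (1 + (t : ℝ))) :=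
    hasSum_sum (fun t _ => hasSum_recip_consec t)
  have hval : ∑ t ∈ Finset.Ico a b, 1 / (1 + (t : ℝ)) = H b - H a := by
    rw [Finset.sum_Ico_eq_sub _ hab, H_range, H_range]
    congr 1 <;> · apply Finset.sum_congr rfl; intro i _; ring_nf
  rw [← hval]
  convert hsum using 1
  exact funext key

lemma Hbar_range (a : ℕ) : ∑ i ∈ Finset.range (a + 1), 1 / (i : ℝ) ^ 2 = Hbar a := by
  induction a with
  | zero => simp [Hbar_zero]
  | succ n ih =>
    rw [Finset.sum_range_succ, ih, Hbar_succ]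
    push_cast; ring

lemma hasSum_sq_shift (a : ℕ) :
    HasSum (fun k : ℕ => 1 / ((k : ℝ) + 1 + a) ^ 2) (Real.pi ^ 2 / 6 - Hbar a) := by
  have h := (hasSum_nat_add_iff' (a + 1)
    (f := fun n : ℕ => 1 / (n : ℝ) ^ 2)).2 hasSum_zeta_two
  rw [Hbar_range] at h
  convert h using 2 with k
  · rfl
  push_cast; ring

lemma tendsto_log_pow_div (c : ℝ) (p : ℕ) :
    Filter.Tendsto (fun n : ℕ => Real.log ((n : ℝ) + 1) ^ p / ((n : ℝ) + 1 + c))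
      Filter.atTop (nhds 0) := by
  have h := Real.tendsto_pow_log_div_mul_add_atTop 1 c p one_ne_zero
  have hc : Filter.Tendsto (fun n : ℕ => (n : ℝ) + 1) Filter.atTop Filter.atTop :=
    Filter.tendsto_atTop_add_const_right _ _ tendsto_natCast_atTop_atTop
  have := h.comp hc
  simpa [Function.comp_def, one_mul] using this

lemma H_bound (n : ℕ) : H (n + 1) ≤ 1 + Real.log ((n : ℝ) + 1) := by
  have := H_le_log (n + 1)
  push_cast at this
  exact this

lemma tendsto_H_div : Filter.Tendsto (fun n : ℕ => H (n + 1) / ((n : ℝ) + 1))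
    Filter.atTop (nhds 0) := by
  apply squeeze_zero (fun n => div_nonneg (H_nonneg _) (by positivity))
    (g := fun n : ℕ => 1 / ((n : ℝ) + 1 + 0) + Real.log ((n : ℝ) + 1) ^ 1 / ((n : ℝ) + 1 + 0))
  · intro n
    have hb := H_bound n
    have hp : (0:ℝ) < (n : ℝ) + 1 := by positivity
    rw [div_le_iff₀ hp]
    calc H (n+1) ≤ 1 + Real.log ((n:ℝ)+1) := hb
      _ = (1 / ((n : ℝ) + 1 + 0) + Real.log ((n : ℝ) + 1) ^ 1 / ((n : ℝ) + 1 + 0)) * ((n:ℝ)+1) := by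
        field_simp
        ring
  · simpa using (tendsto_log_pow_div 0 0).add (tendsto_log_pow_div 0 1)

lemma tendsto_H_sq_div (c : ℝ) (hc : 0 ≤ c) :
    Filter.Tendsto (fun n : ℕ => H (n + 1) ^ 2 / ((n : ℝ) + 1 + c))
      Filter.atTop (nhds 0) := by
  apply squeeze_zero (fun n => div_nonneg (by positivity) (by positivity))
    (g := fun n : ℕ => 1 / ((n : ℝ) + 1 + c) + 2 * (Real.log ((n : ℝ) + 1) ^ 1 / ((n : ℝ) + 1 + c))
      + Real.log ((n : ℝ) + 1) ^ 2 / ((n : ℝ) + 1 + c))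
  · intro n
    have hb := H_bound n
    have h0 := H_nonneg (n + 1)
    have hl : (0:ℝ) ≤ Real.log ((n:ℝ)+1) := Real.log_nonneg (by push_cast; linarith)
    have hp : (0:ℝ) < (n : ℝ) + 1 + c := by positivity
    have heq : 1 / ((n : ℝ) + 1 + c) + 2 * (Real.log ((n : ℝ) + 1) ^ 1 / ((n : ℝ) + 1 + c))
        + Real.log ((n : ℝ) + 1) ^ 2 / ((n : ℝ) + 1 + c)
        = (1 + 2 * Real.log ((n:ℝ)+1) + Real.log ((n:ℝ)+1) ^ 2) / ((n : ℝ) + 1 + c) := by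
      field_simp
    rw [heq, div_le_div_iff₀ hp hp]
    have hsq : H (n+1) ^ 2 ≤ (1 + Real.log ((n:ℝ)+1)) ^ 2 := by nlinarith
    nlinarith [mul_le_mul_of_nonneg_right hsq hp.le]
  · have := ((tendsto_log_pow_div c 0).add ((tendsto_log_pow_div c 1).const_mul 2)).add
      (tendsto_log_pow_div c 2)
    simpa using this

lemma w_mono (n : ℕ) : H (n + 2) / ((n : ℝ) + 1 + 1) ≤ H (n + 1) / ((n : ℝ) + 1) := by
  have h1 : (0:ℝ) < (n : ℝ) + 1 := by positivity
  have h2 : (0:ℝ) < (n : ℝ) + 1 + 1 := by positivity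
  have hone := H_one_le n
  have hs : H (n + 2) = H (n + 1) + 1 / ((n : ℝ) + 1 + 1) := by
    rw [H_succ (n + 1)]; push_cast; ring_nf
  rw [div_le_div_iff₀ h2 h1, hs]
  have hd : 1 / ((n:ℝ) + 1 + 1) * ((n:ℝ) + 1 + 1) = 1 := by field_simp
  have hd0 : 0 < 1 / ((n:ℝ) + 1 + 1) := by positivity
  nlinarith

lemma hasSum_w_gap (m : ℕ) :
    HasSum (fun k : ℕ => H (k + 1) / ((k : ℝ) + 1) - H (k + m + 1) / ((k : ℝ) + m + 1))
      (∑ i ∈ Finset.range m, H (i + 1) / ((i : ℝ) + 1)) := by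
  set w : ℕ → ℝ := fun n => H (n + 1) / ((n : ℝ) + 1) with hw
  have hmono : ∀ n, w (n + 1) ≤ w n := fun n => by
    simpa [hw] using w_mono n
  have key : ∀ k : ℕ, w k - w (k + m) = ∑ i ∈ Finset.range m, (w (k + i) - w (k + i + 1)) := by
    intro k
    induction m with
    | zero => simp
    | succ p ih => rw [Finset.sum_range_succ, ← ih, ← Nat.add_assoc]; ring
  have hsum : HasSum (fun k : ℕ => ∑ i ∈ Finset.range m, (w (k + i) - w (k + i + 1)))
      (∑ i ∈ Finset.range m, w i) :=
    hasSum_sum (fun i _ => tele_shift w hmono tendsto_H_div i)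
  have : HasSum (fun k : ℕ => w k - w (k + m)) (∑ i ∈ Finset.range m, w i) := by
    convert hsum using 1; exact funext key
  convert this using 2 with k
  simp only [hw]
  push_cast
  ring_nf

lemma sum_H_div (m : ℕ) :
    ∑ i ∈ Finset.range m, H (i + 1) / ((i : ℝ) + 1) = (H m ^ 2 + Hbar m) / 2 := by
  induction m with
  | zero => simp [H_zero, Hbar_zero]
  | succ n ih =>
    rw [Finset.sum_range_succ, ih, H_succ, Hbar_succ]
    have h : ((n:ℝ) + 1) ≠ 0 := by positivity
    field_simp
    ring

lemma sum_reflect (m : ℕ) (g : ℕ → ℝ) :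
    ∑ s ∈ Finset.Icc 1 m, g (m + 1 - s) = ∑ s ∈ Finset.Icc 1 m, g s := by
  apply Finset.sum_nbij' (i := fun s => m + 1 - s) (j := fun s => m + 1 - s)
  · intro a ha; simp at ha ⊢; omega
  · intro a ha; simp at ha ⊢; omega
  · intro a ha; simp at ha; omega
  · intro a ha; simp at ha; omega
  · intro a ha; rfl

lemma H_diff (n m : ℕ) :
    H (n + m) - H n = ∑ i ∈ Finset.Icc 1 m, 1 / ((n : ℝ) + i) := by
  induction m with
  | zero => simp
  | succ p ih =>
    rw [Finset.sum_Icc_succ_top (by omega), ← ih, ← Nat.add_assoc, H_succ]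
    push_cast; ring

lemma sum_inv_reflect (m : ℕ) : ∑ s ∈ Finset.Icc 1 m, 1 / ((m:ℝ) + 1 - s) = H m := by
  have : ∀ s ∈ Finset.Icc 1 m, 1 / ((m:ℝ) + 1 - s) = (fun t : ℕ => 1 / (t:ℝ)) (m + 1 - s) := by
    intro s hs
    simp only [Finset.mem_Icc] at hs
    have : ((m + 1 - s : ℕ) : ℝ) = (m:ℝ) + 1 - s := by
      have := hs.2; push_cast [Nat.cast_sub (by omega : s ≤ m + 1)]; ring
    show 1 / ((m:ℝ) + 1 - s) = 1 / ((m + 1 - s : ℕ) : ℝ)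
    rw [this]
  rw [Finset.sum_congr rfl this, sum_reflect m (fun t => 1 / (t:ℝ))]
  rfl

lemma sum_inv_mul (m : ℕ) :
    ∑ s ∈ Finset.Icc 1 m, 1 / ((s:ℝ) * ((m:ℝ) + 1 - s)) = 2 * H m / ((m:ℝ) + 1) := by
  have step : ∀ s ∈ Finset.Icc 1 m, 1 / ((s:ℝ) * ((m:ℝ) + 1 - s))
      = (1 / ((m:ℝ) + 1)) * (1 / (s:ℝ) + 1 / ((m:ℝ) + 1 - s)) := by
    intro s hs
    simp only [Finset.mem_Icc] at hs
    have h1 : (1:ℝ) ≤ (s:ℝ) := by exact_mod_cast hs.1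
    have h2 : (s:ℝ) ≤ m := by exact_mod_cast hs.2
    have h3 : (0:ℝ) < (m:ℝ) + 1 - s := by linarith
    have h4 : (0:ℝ) < (s:ℝ) := by linarith
    field_simp
    try ring
  have hH : ∑ s ∈ Finset.Icc 1 m, 1 / (s:ℝ) = H m := rfl
  rw [Finset.sum_congr rfl step, ← Finset.mul_sum, Finset.sum_add_distrib, sum_inv_reflect, hH]
  ring

lemma A_id (m : ℕ) : ∑ s ∈ Finset.Icc 1 m, (H m - H (m - s)) / (s:ℝ) = Hbar m := by
  induction m with
  | zero => simp [Hbar_zero]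
  | succ m ih =>
    rw [Finset.sum_Icc_succ_top (by omega : 1 ≤ m + 1)]
    have hlast : (H (m + 1) - H (m + 1 - (m + 1))) / ((m + 1 : ℕ):ℝ)
        = H (m + 1) / ((m:ℝ) + 1) := by
      simp [H_zero]
    have hm1 : (0:ℝ) < (m:ℝ) + 1 := by positivity
    have step : ∀ s ∈ Finset.Icc 1 m, (H (m + 1) - H (m + 1 - s)) / (s:ℝ)
        = (H m - H (m - s)) / (s:ℝ)
          + (1 / ((s:ℝ) * ((m:ℝ) + 1)) - 1 / ((s:ℝ) * ((m:ℝ) + 1 - s))) := by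
      intro s hs
      simp only [Finset.mem_Icc] at hs
      have h1 : (1:ℝ) ≤ (s:ℝ) := by exact_mod_cast hs.1
      have h2 : (s:ℝ) ≤ m := by exact_mod_cast hs.2
      have h3 : (0:ℝ) < (m:ℝ) + 1 - s := by linarith
      have h4 : (0:ℝ) < (s:ℝ) := by linarith
      have hidx : m + 1 - s = (m - s) + 1 := by omega
      have hcast : ((m - s : ℕ) : ℝ) = (m:ℝ) - s := by
        push_cast [Nat.cast_sub hs.2]; ring
      have hH1 : H (m + 1) = H m + 1 / ((m:ℝ) + 1) := by
        rw [H_succ]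
      have hH2 : H (m + 1 - s) = H (m - s) + 1 / ((m:ℝ) + 1 - s) := by
        rw [hidx, H_succ, hcast]; ring_nf
      rw [hH1, hH2]
      field_simp
      ring
    rw [Finset.sum_congr rfl step, Finset.sum_add_distrib, ih, Finset.sum_sub_distrib]
    have e1 : ∑ s ∈ Finset.Icc 1 m, 1 / ((s:ℝ) * ((m:ℝ) + 1)) = H m * (1 / ((m:ℝ) + 1)) := by
      have hterm : ∀ s ∈ Finset.Icc 1 m, 1 / ((s:ℝ) * ((m:ℝ) + 1))
          = (1 / (s:ℝ)) * (1 / ((m:ℝ) + 1)) := fun s _ => (one_div_mul_one_div _ _).symm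
      rw [Finset.sum_congr rfl hterm, ← Finset.sum_mul]
      rfl
    rw [e1, sum_inv_mul, hlast, Hbar_succ]
    have hH1 : H (m + 1) = H m + 1 / ((m:ℝ) + 1) := by
      rw [H_succ]
    rw [hH1]
    field_simp
    ring

lemma sum_T (m : ℕ) (hm : 1 ≤ m) :
    ∑ i ∈ Finset.Icc 1 (m - 1), (H m - H i) / ((m:ℝ) - i) = Hbar m - H m / m := by
  have hA := A_id m
  have hsplit : ∑ s ∈ Finset.Icc 1 m, (H m - H (m - s)) / (s:ℝ)
      = ∑ s ∈ Finset.Icc 1 (m - 1), (H m - H (m - s)) / (s:ℝ) + (H m - H (m - m)) / (m:ℝ) := by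
    have := Finset.sum_Icc_succ_top (a := 1) (b := m - 1) (by omega)
      (fun s => (H m - H (m - s)) / (s:ℝ))
    rw [show m - 1 + 1 = m by omega] at this
    exact this
  have hreflect : ∑ s ∈ Finset.Icc 1 (m - 1), (H m - H (m - s)) / (s:ℝ)
      = ∑ i ∈ Finset.Icc 1 (m - 1), (H m - H i) / ((m:ℝ) - i) := by
    have := sum_reflect (m - 1) (fun i => (H m - H i) / ((m:ℝ) - i))
    rw [← this]
    apply Finset.sum_congr rfl
    intro s hs
    simp only [Finset.mem_Icc] at hs
    have h1 : m - 1 + 1 - s = m - s := by omega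
    have h2 : ((m - s : ℕ) : ℝ) = (m:ℝ) - s := by
      push_cast [Nat.cast_sub (by omega : s ≤ m)]; ring
    rw [h1, h2]
    ring_nf
  rw [hsplit, hreflect] at hA
  simp only [Nat.sub_self, H_zero, sub_zero] at hA
  linarith

lemma hasSum_Q (m : ℕ) (hm : 1 ≤ m) :
    HasSum (fun k : ℕ => H (k + 1) / ((k:ℝ) + 1) - H (k + 1) / ((k:ℝ) + 1 + m))
      ((H m ^ 2 + Hbar m) / 2 + Real.pi ^ 2 / 6 - H m / m) := by
  set g : ℕ → ℝ := fun i => if i = m then Real.pi ^ 2 / 6 - Hbar m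
    else (H m - H i) / ((m:ℝ) - i) with hg
  have hG : ∀ i ∈ Finset.Icc 1 m,
      HasSum (fun k : ℕ => 1 / (((k:ℝ) + 1 + i) * ((k:ℝ) + 1 + m))) (g i) := by
    intro i hi
    simp only [Finset.mem_Icc] at hi
    by_cases him : i = m
    · rw [him]
      have hgm : g m = Real.pi ^ 2 / 6 - Hbar m := by simp [hg]
      rw [hgm]
      have hb := hasSum_sq_shift m
      rw [show (fun k : ℕ => 1 / ((k:ℝ) + 1 + m) ^ 2)
        = (fun k : ℕ => 1 / (((k:ℝ) + 1 + m) * ((k:ℝ) + 1 + m))) from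
        funext fun k => by ring_nf] at hb
      exact hb
    · have hilt : i < m := lt_of_le_of_ne hi.2 him
      rw [hg]; simp only [if_neg him]
      have hgap := (hasSum_gap (le_of_lt hilt)).div_const ((m:ℝ) - i)
      convert hgap using 2 with k
      · rfl
      have c1 : (0:ℝ) < (k:ℝ) + 1 + i := by positivity
      have c2 : (0:ℝ) < (k:ℝ) + 1 + m := by positivity
      have c3 : (0:ℝ) < (m:ℝ) - i := by
        have : (i:ℝ) < m := by exact_mod_cast hilt
        linarith
      field_simp
      try ring
  have hsum2 : HasSum (fun k : ℕ => ∑ i ∈ Finset.Icc 1 m,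
      1 / (((k:ℝ) + 1 + i) * ((k:ℝ) + 1 + m))) (∑ i ∈ Finset.Icc 1 m, g i) :=
    hasSum_sum hG
  have hsum1 := hasSum_w_gap m
  have hcomb := hsum1.add hsum2
  have hterm : ∀ k : ℕ, H (k + 1) / ((k:ℝ) + 1) - H (k + 1) / ((k:ℝ) + 1 + m)
      = (H (k + 1) / ((k:ℝ) + 1) - H (k + m + 1) / ((k:ℝ) + m + 1))
        + ∑ i ∈ Finset.Icc 1 m, 1 / (((k:ℝ) + 1 + i) * ((k:ℝ) + 1 + m)) := by
    intro k
    have hd := H_diff (k + 1) m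
    have hidx : k + 1 + m = k + m + 1 := by omega
    rw [hidx] at hd
    have hstep : ∀ i ∈ Finset.Icc 1 m, 1 / (((k:ℝ) + 1 + i) * ((k:ℝ) + 1 + m))
        = (1 / (((k + 1 : ℕ) : ℝ) + i)) / ((k:ℝ) + 1 + m) := by
      intro i hi
      push_cast
      rw [div_div]
    rw [Finset.sum_congr rfl hstep, ← Finset.sum_div, ← hd]
    have c2 : (0:ℝ) < (k:ℝ) + 1 + m := by positivity
    have hcast : ((k:ℝ) + m + 1) = ((k:ℝ) + 1 + m) := by ring
    rw [hcast]
    ring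
  have hval : ∑ i ∈ Finset.range m, H (i + 1) / ((i:ℝ) + 1) + ∑ i ∈ Finset.Icc 1 m, g i
      = (H m ^ 2 + Hbar m) / 2 + Real.pi ^ 2 / 6 - H m / m := by
    have hsplitg : ∑ i ∈ Finset.Icc 1 m, g i
        = ∑ i ∈ Finset.Icc 1 (m - 1), g i + g m := by
      have := Finset.sum_Icc_succ_top (a := 1) (b := m - 1) (by omega) g
      rw [show m - 1 + 1 = m by omega] at this
      exact this
    have hgm : g m = Real.pi ^ 2 / 6 - Hbar m := by rw [hg]; simp
    have hrest : ∑ i ∈ Finset.Icc 1 (m - 1), g i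
        = ∑ i ∈ Finset.Icc 1 (m - 1), (H m - H i) / ((m:ℝ) - i) := by
      apply Finset.sum_congr rfl
      intro i hi
      simp only [Finset.mem_Icc] at hi
      rw [hg]; simp only [if_neg (by omega : i ≠ m)]
    rw [hsplitg, hgm, hrest, sum_T m hm, sum_H_div]
    ring
  rw [← hval]
  convert hcomb using 1
  exact funext hterm

lemma H_one : H 1 = 1 := by simp [H]

lemma hasSum_R (m : ℕ) (hm : 1 ≤ m) :
    HasSum (fun k : ℕ => 1 / (((k:ℝ) + 1) ^ 2 * ((k:ℝ) + 1 + m)))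
      (Real.pi ^ 2 / (6 * m) - H m / (m:ℝ) ^ 2) := by
  have hM : (0:ℝ) < m := by exact_mod_cast hm
  have hsq := hasSum_sq_shift 0
  have hgap := hasSum_gap (Nat.zero_le m)
  simp only [Nat.cast_zero, add_zero, Hbar_zero, H_zero, sub_zero] at hsq hgap
  have hc := (hsq.mul_left (1/(m:ℝ))).sub (hgap.mul_left (1/(m:ℝ)^2))
  convert hc using 1
  · rfl
  · funext k
    have c1 : (0:ℝ) < (k:ℝ) + 1 := by positivity
    have c2 : (0:ℝ) < (k:ℝ) + 1 + m := by positivity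
    field_simp
    ring
  · field_simp

lemma hasSum_P (m : ℕ) (hm : 1 ≤ m) :
    HasSum (fun k : ℕ => (2 * H (k + 1) - 1 / ((k:ℝ) + 1)) / (((k:ℝ) + 1) * ((k:ℝ) + 1 + m)))
      ((1 / m) * (Real.pi ^ 2 / 6 + H m ^ 2 + Hbar m - H m / m)) := by
  have hM : (0:ℝ) < m := by exact_mod_cast hm
  have hQ := (hasSum_Q m hm).div_const (m:ℝ)
  have hc := (hQ.mul_left 2).sub (hasSum_R m hm)
  convert hc using 1
  · rfl
  · funext k
    have c1 : (0:ℝ) < (k:ℝ) + 1 := by positivity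
    have c2 : (0:ℝ) < (k:ℝ) + 1 + m := by positivity
    field_simp
    ring
  · field_simp
    ring

theorem sum_H_sq_partial_fraction (m : ℕ) (hm : 1 ≤ m) :
    HasSum (fun k : ℕ => (H (k + 1)) ^ 2 / (((k : ℝ) + 1 + m) * ((k : ℝ) + 1 + m + 1)))
      ((1 / m) * (Real.pi ^ 2 / 6 + (H m) ^ 2 + Hbar m - H m / m)) := by
  have hM : (0:ℝ) < m := by exact_mod_cast hm
  set T : ℝ := (1 / m) * (Real.pi ^ 2 / 6 + (H m) ^ 2 + Hbar m - H m / m) with hT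
  set p : ℕ → ℝ := fun k =>
    (2 * H (k + 1) - 1 / ((k:ℝ) + 1)) / (((k:ℝ) + 1) * ((k:ℝ) + 1 + m)) with hp
  have hP : HasSum p T := hasSum_P m hm
  have hp0 : p 0 = 1 / (1 + (m:ℝ)) := by
    simp only [hp, Nat.cast_zero, zero_add, H_one]
    norm_num
  have hshift : HasSum (fun k => p (k + 1)) (T - 1 / (1 + (m:ℝ))) := by
    apply (hasSum_nat_add_iff 1).mpr
    convert hP using 1
    · rfl
    simp [hp0]
  have htp := hshift.tendsto_sum_nat
  set F : ℕ → ℝ := fun j => H (j + 1) ^ 2 / ((j:ℝ) + 1 + m) with hF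
  have hterm : ∀ k : ℕ, H (k + 1) ^ 2 / (((k : ℝ) + 1 + m) * ((k : ℝ) + 1 + m + 1))
      = (F k - F (k + 1)) + p (k + 1) := by
    intro k
    have hH2 : H (k + 2) = H (k + 1) + 1 / ((k:ℝ) + 2) := by
      rw [H_succ (k + 1)]; push_cast; ring_nf
    simp only [hF, hp]
    push_cast
    rw [show k + 1 + 1 = k + 2 from rfl, hH2]
    have c1 : (0:ℝ) < (k:ℝ) + 1 + m := by positivity
    have c2 : (0:ℝ) < (k:ℝ) + 2 + m := by positivity
    have c3 : (0:ℝ) < (k:ℝ) + 2 := by positivity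
    have c4 : (0:ℝ) < (k:ℝ) + 1 + m + 1 := by positivity
    field_simp
    ring
  rw [hasSum_iff_tendsto_nat_of_nonneg
    (fun k => div_nonneg (sq_nonneg _) (by positivity))]
  have hps : ∀ N : ℕ, ∑ k ∈ Finset.range N,
      H (k + 1) ^ 2 / (((k : ℝ) + 1 + m) * ((k : ℝ) + 1 + m + 1))
      = (F 0 - F N) + ∑ k ∈ Finset.range N, p (k + 1) := by
    intro N
    rw [Finset.sum_congr rfl (fun k _ => hterm k), Finset.sum_add_distrib,
      Finset.sum_range_sub' F]
  simp only [hps]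
  have hF0 : F 0 = 1 / (1 + (m:ℝ)) := by
    simp only [hF, Nat.cast_zero, zero_add, H_one]
    norm_num
  have hFlim : Filter.Tendsto F Filter.atTop (nhds 0) := tendsto_H_sq_div (m:ℝ) hM.le
  have hc : Filter.Tendsto (fun _ : ℕ => F 0) Filter.atTop (nhds (F 0)) := tendsto_const_nhds
  have hlim := (hc.sub hFlim).add htp
  have hval : F 0 - 0 + (T - 1 / (1 + (m:ℝ))) = T := by rw [hF0]; ring
  rw [hval] at hlim
  exact hlim
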